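/- In the sphere of constant curvature 1/k², consider a hinge with two sides of lengths a, b ≤ d/2 meeting at angle γ, with d/k < 1/2. Let c be the length of the third side, determined by the spherical cosine rule cos(c/k) = cos(a/k)cos(b/k) + sin(a/k)sin(b/k)cos γ. Then c² = a² + b² − 2ab·cos γ + E′ with |E′| ≤ 5 d⁴/k². -/

import Mathlib

noncomputable section

private lemma sin_cube_lb {x : ℝ} (h0 : 0 ≤ x) (h1 : x ≤ 1) :
    x - x ^ 3 / 4 ≤ Real.sin x := by
  rcases eq_or_lt_of_le h0 with h | h
  · simp [← h]
  · have := Real.sin_gt_sub_cube h; nlinarith [pow_nonneg h0 3]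

private lemma prod_bound (x y sx sy : ℝ) (hx0 : 0 ≤ x) (hx1 : x ≤ 1)
    (hy0 : 0 ≤ y) (hy1 : y ≤ 1)
    (hsx1 : sx ≤ x) (hsx2 : x - x ^ 3 / 4 ≤ sx)
    (hsy1 : sy ≤ y) (hsy2 : y - y ^ 3 / 4 ≤ sy)
    (hsx0 : 0 ≤ sx) (hsy0 : 0 ≤ sy) :
    x * y - x * y * (x ^ 2 + y ^ 2) / 4 ≤ sx * sy ∧ sx * sy ≤ x * y := by
  have hyc : 0 ≤ y - y ^ 3 / 4 := by
    nlinarith [mul_nonneg (mul_nonneg hy0 (by linarith : (0:ℝ) ≤ 1 - y))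
      (by linarith : (0:ℝ) ≤ 1 + y)]
  constructor
  · have h1 : (x - x ^ 3 / 4) * (y - y ^ 3 / 4) ≤ sx * sy :=
      mul_le_mul hsx2 hsy2 hyc hsx0
    nlinarith [mul_nonneg (mul_nonneg hx0 hy0)
      (mul_nonneg (pow_nonneg hx0 2) (pow_nonneg hy0 2))]
  · exact mul_le_mul hsx1 hsy1 hsy0 hx0

private lemma q_bounds (u x y cγ : ℝ) (hx0 : 0 ≤ x) (hx : x ≤ u / 2)
    (hy0 : 0 ≤ y) (hy : y ≤ u / 2) (hcγ1 : cγ ≤ 1) (hcγ2 : -1 ≤ cγ) :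
    0 ≤ x ^ 2 + y ^ 2 - 2 * x * y * cγ ∧ x ^ 2 + y ^ 2 - 2 * x * y * cγ ≤ u ^ 2 := by
  constructor
  · nlinarith [sq_nonneg (x - y), mul_nonneg hx0 hy0]
  · nlinarith [sq_nonneg (x + y), mul_nonneg hx0 hy0]

private lemma upow (u : ℝ) (hu0 : 0 < u) (hu : u < 1 / 2) :
    u ^ 2 ≤ 1 / 4 ∧ u ^ 4 ≤ 1 / 16 ∧ u ^ 4 ≤ u ^ 2 / 4 := by
  have hu2 : u ^ 2 ≤ 1 / 4 := by nlinarith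
  have h42 : u ^ 4 ≤ u ^ 2 / 4 := by
    nlinarith [mul_le_mul_of_nonneg_left hu2 (sq_nonneg u)]
  exact ⟨hu2, by linarith, h42⟩

private lemma error_bound (u x y cγ P S : ℝ) (hu0 : 0 < u) (hu : u < 1 / 2)
    (hx0 : 0 ≤ x) (hx : x ≤ u / 2) (hy0 : 0 ≤ y) (hy : y ≤ u / 2)
    (hcγ1 : cγ ≤ 1) (hcγ2 : -1 ≤ cγ)
    (hP : |P| ≤ (u / 2) ^ 4 * (5 / 96))
    (hS1 : S ≤ x * y) (hS2 : x * y - x * y * (x ^ 2 + y ^ 2) / 4 ≤ S) :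
    |P + (S - x * y) * (1 - cγ)| ≤ u ^ 4 / 8 := by
  obtain ⟨hP1, hP2⟩ := abs_le.mp hP
  have hδ0 : (0 : ℝ) ≤ 1 - cγ := by linarith
  have hδ2 : 1 - cγ ≤ 2 := by linarith
  have hxy : x * y ≤ u ^ 2 / 4 := by
    nlinarith [mul_le_mul hx hy hy0 (by linarith : (0:ℝ) ≤ u / 2)]
  have hx2 : x ^ 2 ≤ u ^ 2 / 4 := by nlinarith [pow_le_pow_left₀ hx0 hx 2]
  have hy2 : y ^ 2 ≤ u ^ 2 / 4 := by nlinarith [pow_le_pow_left₀ hy0 hy 2]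
  have hxyb : x * y * (x ^ 2 + y ^ 2) ≤ u ^ 4 / 8 := by
    nlinarith [mul_le_mul hxy (add_le_add hx2 hy2)
      (add_nonneg (sq_nonneg x) (sq_nonneg y)) (by positivity : (0:ℝ) ≤ u ^ 2 / 4)]
  have hA : (S - x * y) * (1 - cγ) ≤ 0 :=
    mul_nonpos_of_nonpos_of_nonneg (by linarith) hδ0
  have hB : -(x * y * (x ^ 2 + y ^ 2) / 4) * 2 ≤ (S - x * y) * (1 - cγ) := by
    nlinarith [mul_nonneg (mul_nonneg hx0 hy0)
      (add_nonneg (pow_nonneg hx0 2) (pow_nonneg hy0 2))]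
  rw [abs_le]
  constructor <;> nlinarith

private lemma core (u t Q P : ℝ) (hu0 : 0 < u) (hu : u < 1 / 2)
    (ht0 : 0 ≤ t) (ht1 : t ≤ 1)
    (hq0 : 0 ≤ Q) (hq : Q ≤ u ^ 2)
    (hE1 : -(u ^ 4 / 8) ≤ P) (hE2 : P ≤ u ^ 4 / 8)
    (hct1 : -(t ^ 4 * (5 / 96)) ≤ Q / 2 + P - t ^ 2 / 2)
    (hct2 : Q / 2 + P - t ^ 2 / 2 ≤ t ^ 4 * (5 / 96)) :
    |t ^ 2 - Q| ≤ 5 * u ^ 4 := by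
  obtain ⟨hu2, hu4, hu42⟩ := upow u hu0 hu
  have ht21 : t ^ 2 ≤ 1 := by nlinarith
  have ht4 : t ^ 4 ≤ t ^ 2 := by
    nlinarith [mul_le_mul_of_nonneg_left ht21 (sq_nonneg t)]
  have ht2 : t ^ 2 ≤ 2 * u ^ 2 := by linarith
  have ht44 : t ^ 4 ≤ 4 * u ^ 4 := by
    nlinarith [mul_le_mul ht2 ht2 (sq_nonneg t) (by positivity : (0:ℝ) ≤ 2 * u ^ 2)]
  rw [abs_le]
  constructor <;> linarith

/-- **Spherical hinge estimate.**  On the sphere of curvature `1/k²`, for a hinge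
with sides `a, b ≤ d/2` and angle `γ` (with `d/k < 1/2`), the length `c` of the
closing side, given by the spherical cosine rule, satisfies
`c² = a² + b² − 2ab cos γ + E′` with `|E′| ≤ 5 d⁴/k²`. -/
theorem spherical_hinge_estimate (k d a b γ c : ℝ)
    (hk : 0 < k) (hd : 0 < d) (hdk : d / k < 1 / 2)
    (ha0 : 0 ≤ a) (ha : a ≤ d / 2) (hb0 : 0 ≤ b) (hb : b ≤ d / 2)
    (hγ0 : 0 ≤ γ) (hγ : γ ≤ Real.pi) (hc0 : 0 ≤ c) (hc : c ≤ Real.pi * k)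
    (hrule : Real.cos (c / k) =
      Real.cos (a / k) * Real.cos (b / k) +
        Real.sin (a / k) * Real.sin (b / k) * Real.cos γ) :
    |c ^ 2 - (a ^ 2 + b ^ 2 - 2 * a * b * Real.cos γ)| ≤ 5 * d ^ 4 / k ^ 2 := by
  set u := d / k with hu_def
  set x := a / k with hx_def
  set y := b / k with hy_def
  set t := c / k with ht_def
  have hu0 : 0 < u := div_pos hd hk
  have hu : u < 1 / 2 := hdk
  obtain ⟨hu2, hu4, hu42⟩ := upow u hu0 hu
  have hx0 : 0 ≤ x := div_nonneg ha0 hk.le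
  have hy0 : 0 ≤ y := div_nonneg hb0 hk.le
  have ht0 : 0 ≤ t := div_nonneg hc0 hk.le
  have hx : x ≤ u / 2 := by
    have h1 : a / k ≤ (d / 2) / k := (div_le_div_iff_of_pos_right hk).mpr ha
    have h2 : (d / 2) / k = u / 2 := by rw [hu_def]; ring
    rw [hx_def]; linarith [h2 ▸ h1]
  have hy : y ≤ u / 2 := by
    have h1 : b / k ≤ (d / 2) / k := (div_le_div_iff_of_pos_right hk).mpr hb
    have h2 : (d / 2) / k = u / 2 := by rw [hu_def]; ring
    rw [hy_def]; linarith [h2 ▸ h1]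
  have htpi : t ≤ Real.pi := by
    rw [ht_def, div_le_iff₀ hk]; linarith
  have hx4 : x ≤ 1 / 4 := by linarith
  have hy4 : y ≤ 1 / 4 := by linarith
  have hcγ1 : Real.cos γ ≤ 1 := Real.cos_le_one γ
  have hcγ2 : -1 ≤ Real.cos γ := Real.neg_one_le_cos γ
  -- the difference of directions
  set s := x - y with hs_def
  have hsabs : |s| ≤ u / 2 := by
    rw [abs_le]; constructor <;> rw [hs_def] <;> linarith
  have hs1 : |s| ≤ 1 := by linarith
  have hcsb : |Real.cos s - (1 - s ^ 2 / 2)| ≤ (u / 2) ^ 4 * (5 / 96) := by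
    refine (Real.cos_bound hs1).trans ?_
    have h1 : |s| ^ 4 ≤ (u / 2) ^ 4 := pow_le_pow_left₀ (abs_nonneg _) hsabs 4
    exact mul_le_mul_of_nonneg_right h1 (by norm_num)
  -- sin bounds
  have hpi3 : (3 : ℝ) < Real.pi := Real.pi_gt_three
  have hsx0 : 0 ≤ Real.sin x := Real.sin_nonneg_of_nonneg_of_le_pi hx0 (by linarith)
  have hsy0 : 0 ≤ Real.sin y := Real.sin_nonneg_of_nonneg_of_le_pi hy0 (by linarith)
  obtain ⟨hprod2, hprod1⟩ := prod_bound x y (Real.sin x) (Real.sin y)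
    hx0 (by linarith) hy0 (by linarith)
    (Real.sin_le hx0) (sin_cube_lb hx0 (by linarith))
    (Real.sin_le hy0) (sin_cube_lb hy0 (by linarith)) hsx0 hsy0
  -- identity from the cosine rule
  have hid : 1 - Real.cos t =
      (1 - Real.cos s) + Real.sin x * Real.sin y * (1 - Real.cos γ) := by
    rw [hrule, hs_def, Real.cos_sub]; ring
  set q := x ^ 2 + y ^ 2 - 2 * x * y * Real.cos γ with hq_def
  obtain ⟨hq0, hq_ub⟩ := q_bounds u x y (Real.cos γ) hx0 hx hy0 hy hcγ1 hcγ2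
  -- main error bound for 1 - cos t vs q/2
  have hEeq : (1 - Real.cos t) - q / 2 =
      (-(Real.cos s - (1 - s ^ 2 / 2))) +
        (Real.sin x * Real.sin y - x * y) * (1 - Real.cos γ) := by
    rw [hid, hq_def, hs_def]; ring
  have hE : |(1 - Real.cos t) - q / 2| ≤ u ^ 4 / 8 := by
    rw [hEeq]
    exact error_bound u x y (Real.cos γ) _ _ hu0 hu hx0 hx hy0 hy hcγ1 hcγ2
      (by rwa [abs_neg]) hprod1 hprod2
  obtain ⟨hE1, hE2⟩ := abs_le.mp hE
  -- cos t is large, so t ≤ 1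
  have hcost : 3 / 4 ≤ Real.cos t := by linarith
  have ht1 : t ≤ 1 := by
    by_contra h
    push_neg at h
    have h1 : Real.cos t ≤ Real.cos 1 :=
      Real.cos_le_cos_of_nonneg_of_le_pi (by norm_num) htpi h.le
    have h2 : Real.cos 1 ≤ 2 / 3 := Real.cos_one_le.trans (by norm_num)
    linarith
  -- cos bound at t
  have hct : |Real.cos t - (1 - t ^ 2 / 2)| ≤ t ^ 4 * (5 / 96) := by
    have h1 := Real.cos_bound (abs_le.mpr ⟨by linarith, ht1⟩ : |t| ≤ 1)
    rwa [abs_of_nonneg ht0] at h1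
  obtain ⟨hct1, hct2⟩ := abs_le.mp hct
  -- final bound on |t² − q|
  have hfinal : |t ^ 2 - q| ≤ 5 * u ^ 4 := by
    refine core u t q ((1 - Real.cos t) - q / 2) hu0 hu ht0 ht1 hq0 hq_ub hE1 hE2
      (by linarith) (by linarith)
  -- translate back
  have hk2 : (0 : ℝ) < k ^ 2 := by positivity
  have key : c ^ 2 - (a ^ 2 + b ^ 2 - 2 * a * b * Real.cos γ) = k ^ 2 * (t ^ 2 - q) := by
    rw [hq_def, ht_def, hx_def, hy_def]
    field_simp
  have hrhs : 5 * d ^ 4 / k ^ 2 = k ^ 2 * (5 * u ^ 4) := by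
    rw [hu_def]; field_simp
  rw [key, hrhs, abs_mul, abs_of_pos hk2]
  exact mul_le_mul_of_nonneg_left hfinal hk2.le

end
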